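/- Let A be a bounded linear operator on a complex Hilbert space H and suppose w(A) = ‖A‖/2. Then ‖Re(A) + Im(A)‖ = ‖Re(A) − Im(A)‖. -/

import Mathlib

open ContinuousLinearMap Complex

variable {H : Type*} [NormedAddCommGroup H] [InnerProductSpace ℂ H] [CompleteSpace H]

noncomputable def nrad (A : H →L[ℂ] H) : ℝ :=
  ⨆ x : {x : H // ‖x‖ = 1}, ‖(inner ℂ (A x) (x : H) : ℂ)‖

noncomputable def reP (A : H →L[ℂ] H) : H →L[ℂ] H := (2 : ℂ)⁻¹ • (A + adjoint A)
noncomputable def imP (A : H →L[ℂ] H) : H →L[ℂ] H := (2 * Complex.I)⁻¹ • (A - adjoint A)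

noncomputable def oabs (A : H →L[ℂ] H) : H →L[ℂ] H := cfc Real.sqrt (adjoint A * A)

noncomputable def opow (T : H →L[ℂ] H) (r : ℝ) : H →L[ℂ] H := cfc (fun t : ℝ => t ^ r) T

lemma nrad_nonneg (A : H →L[ℂ] H) : 0 ≤ nrad A :=
  Real.iSup_nonneg fun _ => norm_nonneg _

lemma nrad_bound (A : H →L[ℂ] H) (z : H) :
    ‖(inner ℂ (A z) z : ℂ)‖ ≤ nrad A * ‖z‖ ^ 2 := by
  by_cases hz : z = 0
  · simp [hz]
  · have hzn : ‖z‖ ≠ 0 := norm_ne_zero_iff.mpr hz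
    have hx : ‖(‖z‖⁻¹ : ℂ) • z‖ = 1 := by
      simp [norm_smul, inv_mul_cancel₀ hzn]
    have hb : BddAbove (Set.range fun x : {x : H // ‖x‖ = 1} =>
        ‖(inner ℂ (A x) (x : H) : ℂ)‖) := by
      refine ⟨‖A‖, ?_⟩
      rintro _ ⟨x, rfl⟩
      calc ‖(inner ℂ (A x) (x : H) : ℂ)‖ ≤ ‖A (x : H)‖ * ‖(x : H)‖ := norm_inner_le_norm _ _
        _ ≤ ‖A‖ * ‖(x : H)‖ * ‖(x : H)‖ := by
            exact mul_le_mul_of_nonneg_right (A.le_opNorm _) (norm_nonneg _)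
        _ = ‖A‖ := by rw [x.2]; ring
    have hle := le_ciSup hb (⟨(‖z‖⁻¹ : ℂ) • z, hx⟩ : {x : H // ‖x‖ = 1})
    have hval : ‖(inner ℂ (A ((‖z‖⁻¹ : ℂ) • z)) ((‖z‖⁻¹ : ℂ) • z) : ℂ)‖
        = ‖z‖⁻¹ * ‖z‖⁻¹ * ‖(inner ℂ (A z) z : ℂ)‖ := by
      rw [map_smul, inner_smul_left, inner_smul_right]
      simp [norm_mul, mul_assoc]
    rw [nrad] at *
    have := hle
    rw [hval] at this
    have h2 : ‖(inner ℂ (A z) z : ℂ)‖ = (‖z‖ * ‖z‖) * (‖z‖⁻¹ * ‖z‖⁻¹ * ‖(inner ℂ (A z) z : ℂ)‖) := by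
      field_simp
    rw [h2, pow_two]
    have hnn : 0 ≤ ‖z‖ * ‖z‖ := mul_nonneg (norm_nonneg _) (norm_nonneg _)
    calc (‖z‖ * ‖z‖) * (‖z‖⁻¹ * ‖z‖⁻¹ * ‖(inner ℂ (A z) z : ℂ)‖)
        ≤ (‖z‖ * ‖z‖) * (⨆ x : {x : H // ‖x‖ = 1}, ‖(inner ℂ (A x) (x : H) : ℂ)‖) :=
          mul_le_mul_of_nonneg_left this hnn
      _ = _ := by ring

lemma selfadj_norm_le (S : H →L[ℂ] H) (hS : IsSelfAdjoint S) (C : ℝ) (hC : 0 ≤ C)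
    (hb : ∀ z : H, ‖(inner ℂ (S z) z : ℂ)‖ ≤ C * ‖z‖ ^ 2) : ‖S‖ ≤ C := by
  refine S.opNorm_le_bound hC fun x => ?_
  by_cases hSx : S x = 0
  · rw [hSx, norm_zero]; positivity
  by_cases hx : x = 0
  · simp [hx] at hSx
  have hxn : (0:ℝ) < ‖x‖ := norm_pos_iff.mpr hx
  have hSxn : (0:ℝ) < ‖S x‖ := norm_pos_iff.mpr hSx
  set r : ℝ := ‖x‖ / ‖S x‖ with hr
  set y : H := ((r : ℂ)) • S x with hy
  have hyn : ‖y‖ = ‖x‖ := by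
    rw [hy, norm_smul]
    simp [hr, abs_of_pos (div_pos hxn hSxn), div_mul_cancel₀, hSxn.ne']
  -- polarization
  have key : (inner ℂ (S (x + y)) (x + y) : ℂ) - inner ℂ (S (x - y)) (x - y)
      = 2 * (inner ℂ (S x) y + inner ℂ (S y) x) := by
    simp only [map_add, map_sub, inner_add_left, inner_add_right, inner_sub_left,
      inner_sub_right]
    ring
  have hsym : (inner ℂ (S y) x : ℂ) = starRingEnd ℂ (inner ℂ (S x) y) := by
    nth_rewrite 1 [← hS.adjoint_eq]
    rw [ContinuousLinearMap.adjoint_inner_left, ← inner_conj_symm]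
  have hre : ((inner ℂ (S (x+y)) (x+y) : ℂ)).re - ((inner ℂ (S (x-y)) (x-y) : ℂ)).re
      = 4 * ((inner ℂ (S x) y : ℂ)).re := by
    have := congrArg Complex.re key
    simp only [Complex.sub_re, Complex.mul_re, Complex.add_re, hsym, Complex.conj_re,
      Complex.conj_im] at this
    rw [this]
    norm_num
    ring
  have hval : ((inner ℂ (S x) y : ℂ)).re = r * ‖S x‖ ^ 2 := by
    rw [hy, inner_smul_right]
    have : (inner ℂ (S x) (S x) : ℂ) = ((‖S x‖ : ℂ)) ^ 2 := inner_self_eq_norm_sq_to_K _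
    rw [this, ← Complex.ofReal_pow, ← Complex.ofReal_mul, Complex.ofReal_re]
  have b1 : |((inner ℂ (S (x+y)) (x+y) : ℂ)).re| ≤ C * ‖x + y‖ ^ 2 :=
    le_trans (Complex.abs_re_le_norm _) (hb _)
  have b2 : |((inner ℂ (S (x-y)) (x-y) : ℂ)).re| ≤ C * ‖x - y‖ ^ 2 :=
    le_trans (Complex.abs_re_le_norm _) (hb _)
  have par : ‖x + y‖ ^ 2 + ‖x - y‖ ^ 2 = 2 * (‖x‖^2 + ‖y‖^2) := by
    have := parallelogram_law_with_norm ℂ x y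
    nlinarith [this]
  have hfin : 4 * (r * ‖S x‖ ^ 2) ≤ 4 * (C * ‖x‖ ^ 2) := by
    have h1 : ((inner ℂ (S (x+y)) (x+y) : ℂ)).re ≤ C * ‖x + y‖ ^ 2 :=
      le_trans (le_abs_self _) b1
    have h2 : -(C * ‖x - y‖ ^ 2) ≤ ((inner ℂ (S (x-y)) (x-y) : ℂ)).re := by
      have := neg_abs_le (((inner ℂ (S (x-y)) (x-y) : ℂ)).re)
      linarith
    have : 4 * ((inner ℂ (S x) y : ℂ)).re ≤ C * ‖x + y‖ ^ 2 + C * ‖x - y‖ ^ 2 := by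
      rw [← hre]; linarith
    rw [hval] at this
    have hyx : ‖y‖ ^ 2 = ‖x‖ ^ 2 := by rw [hyn]
    nlinarith [this, par]
  have : r * ‖S x‖ ^ 2 ≤ C * ‖x‖ ^ 2 := by linarith
  rw [hr] at this
  have hx2 : ‖x‖ / ‖S x‖ * ‖S x‖ ^ 2 = ‖x‖ * ‖S x‖ := by
    field_simp
  rw [hx2] at this
  -- ‖x‖ * ‖S x‖ ≤ C * ‖x‖^2, divide by ‖x‖
  nlinarith [this, hxn]

lemma reP_sa (A : H →L[ℂ] H) : IsSelfAdjoint (reP A) := by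
  show star _ = _
  unfold reP
  simp only [star_smul, star_add, ContinuousLinearMap.star_eq_adjoint, adjoint_adjoint]
  rw [add_comm (adjoint A) A]
  norm_num

lemma imP_sa (A : H →L[ℂ] H) : IsSelfAdjoint (imP A) := by
  show star _ = _
  unfold imP
  simp only [star_smul, star_sub, ContinuousLinearMap.star_eq_adjoint, adjoint_adjoint]
  rw [show adjoint A - A = (-1 : ℂ) • (A - adjoint A) by simp [neg_sub], smul_smul]
  congr 1
  simp [map_inv₀, Complex.conj_I]

lemma inner_reP (A : H →L[ℂ] H) (z : H) :
    (inner ℂ ((reP A) z) z : ℂ) = 2⁻¹ * (inner ℂ (A z) z + starRingEnd ℂ (inner ℂ (A z) z)) := by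
  simp only [reP, ContinuousLinearMap.smul_apply, ContinuousLinearMap.add_apply,
    inner_smul_left, inner_add_left, ContinuousLinearMap.adjoint_inner_left,
    ← inner_conj_symm z (A z)]
  rw [map_inv₀, map_ofNat]

lemma inner_imP (A : H →L[ℂ] H) (z : H) :
    (inner ℂ ((imP A) z) z : ℂ)
      = (Complex.I / 2) * (inner ℂ (A z) z - starRingEnd ℂ (inner ℂ (A z) z)) := by
  simp only [imP, ContinuousLinearMap.smul_apply, ContinuousLinearMap.sub_apply,
    inner_smul_left, inner_sub_left, ContinuousLinearMap.adjoint_inner_left,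
    ← inner_conj_symm z (A z)]
  rw [map_inv₀, map_mul, Complex.conj_I, map_ofNat]
  rw [show ((2:ℂ) * -Complex.I)⁻¹ = Complex.I / 2 by
    rw [mul_inv, inv_neg, Complex.inv_I, neg_neg]; ring]

lemma norm_one_sub_I : ‖(1 - Complex.I : ℂ)‖ = Real.sqrt 2 := by
  rw [Complex.norm_def]
  norm_num [Complex.normSq_apply]

lemma norm_one_add_I : ‖(1 + Complex.I : ℂ)‖ = Real.sqrt 2 := by
  rw [Complex.norm_def]
  norm_num [Complex.normSq_apply]

theorem stmt3 (A : H →L[ℂ] H) (h : nrad A = ‖A‖ / 2) :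
    ‖reP A + imP A‖ = ‖reP A - imP A‖ := by
  set s : ℝ := Real.sqrt 2 * ‖A‖ with hs
  have hs2 : (0:ℝ) ≤ Real.sqrt 2 := Real.sqrt_nonneg 2
  -- inner product formulas
  have key1 : ∀ z : H, (inner ℂ ((reP A + imP A) z) z : ℂ)
      = ((1 + Complex.I)/2) * inner ℂ (A z) z
        + starRingEnd ℂ (((1 + Complex.I)/2) * inner ℂ (A z) z) := by
    intro z
    rw [ContinuousLinearMap.add_apply, inner_add_left, inner_reP, inner_imP]
    rw [map_mul]
    simp only [map_div₀, map_add, map_one, Complex.conj_I, Complex.conj_conj, map_ofNat]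
    ring
  have key2 : ∀ z : H, (inner ℂ ((reP A - imP A) z) z : ℂ)
      = ((1 - Complex.I)/2) * inner ℂ (A z) z
        + starRingEnd ℂ (((1 - Complex.I)/2) * inner ℂ (A z) z) := by
    intro z
    rw [ContinuousLinearMap.sub_apply, inner_sub_left, inner_reP, inner_imP]
    rw [map_mul]
    simp only [map_div₀, map_sub, map_one, Complex.conj_I, Complex.conj_conj, map_ofNat]
    ring
  -- upper bounds
  have hub : ∀ (c : ℂ), ‖c‖ = Real.sqrt 2 → ∀ z : H,
      ‖(c/2) * (inner ℂ (A z) z : ℂ) + starRingEnd ℂ ((c/2) * inner ℂ (A z) z)‖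
        ≤ (Real.sqrt 2 * nrad A) * ‖z‖ ^ 2 := by
    intro c hc z
    calc ‖(c/2) * (inner ℂ (A z) z : ℂ) + starRingEnd ℂ ((c/2) * inner ℂ (A z) z)‖
        ≤ ‖(c/2) * (inner ℂ (A z) z : ℂ)‖ + ‖starRingEnd ℂ ((c/2) * (inner ℂ (A z) z : ℂ))‖ :=
          norm_add_le _ _
      _ = 2 * (‖c‖/2 * ‖(inner ℂ (A z) z : ℂ)‖) := by
          rw [RCLike.norm_conj, norm_mul, norm_div]
          simp
          ring
      _ = Real.sqrt 2 * ‖(inner ℂ (A z) z : ℂ)‖ := by rw [hc]; ring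
      _ ≤ Real.sqrt 2 * (nrad A * ‖z‖ ^ 2) :=
          mul_le_mul_of_nonneg_left (nrad_bound A z) hs2
      _ = (Real.sqrt 2 * nrad A) * ‖z‖ ^ 2 := by ring
  have hC : (0:ℝ) ≤ Real.sqrt 2 * nrad A := mul_nonneg hs2 (nrad_nonneg A)
  have ha : ‖reP A + imP A‖ ≤ s / 2 := by
    have := selfadj_norm_le (reP A + imP A) ((reP_sa A).add (imP_sa A))
      (Real.sqrt 2 * nrad A) hC (fun z => by
        rw [key1 z]; exact hub _ norm_one_add_I z)
    rw [h] at this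
    calc ‖reP A + imP A‖ ≤ Real.sqrt 2 * (‖A‖/2) := this
      _ = s / 2 := by rw [hs]; ring
  have hb : ‖reP A - imP A‖ ≤ s / 2 := by
    have := selfadj_norm_le (reP A - imP A) ((reP_sa A).sub (imP_sa A))
      (Real.sqrt 2 * nrad A) hC (fun z => by
        rw [key2 z]; exact hub _ norm_one_sub_I z)
    rw [h] at this
    calc ‖reP A - imP A‖ ≤ Real.sqrt 2 * (‖A‖/2) := this
      _ = s / 2 := by rw [hs]; ring
  -- lower bound : (1-I)•A = S₁ - I•S₂
  have hop : (reP A + imP A) - Complex.I • (reP A - imP A) = (1 - Complex.I) • A := by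
    unfold reP imP
    rw [show ((2:ℂ) * Complex.I)⁻¹ = -(Complex.I/2) by
      rw [mul_inv, Complex.inv_I]; ring]
    match_scalars
    all_goals first
      | linear_combination (-1/2 : ℂ) * Complex.I_sq
      | linear_combination (1/2 : ℂ) * Complex.I_sq
  have hlow : s ≤ ‖reP A + imP A‖ + ‖reP A - imP A‖ := by
    have h1 : ‖(1 - Complex.I) • A‖ = s := by
      rw [norm_smul, norm_one_sub_I]
    calc s = ‖(reP A + imP A) - Complex.I • (reP A - imP A)‖ := by rw [hop, h1]
      _ ≤ ‖reP A + imP A‖ + ‖Complex.I • (reP A - imP A)‖ := norm_sub_le _ _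
      _ = ‖reP A + imP A‖ + ‖reP A - imP A‖ := by
          rw [norm_smul, Complex.norm_I, one_mul]
  linarith
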